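/- Let (E₁, E₂, Φ) be a τ-stable triple with r₁ ≠ r₂. Then τ < μ(E₁) + (r₂/|r₁−r₂|)·(μ(E₁) − μ(E₂)). Equivalently, the corresponding σ satisfies σ < (1 + (r₁+r₂)/|r₁−r₂|)·(μ(E₁) − μ(E₂)). -/

import Mathlib

open CategoryTheory CategoryTheory.Limits

noncomputable section

/-- Slope `d/r` of a bundle of degree `d` and rank `r`. -/
def bslope (d : ℤ) (r : ℕ) : ℝ := (d : ℝ) / (r : ℝ)

/-- The quantity `θ_τ(T')` for a subtriple with ranks `r1', r2'` and degrees `d1', d2'`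
of a triple with ranks `r1, r2` and degrees `d1, d2`. -/
def thetaTau (τ : ℝ) (r1 r2 : ℕ) (d1 d2 : ℤ) (r1' r2' : ℕ) (d1' d2' : ℤ) : ℝ :=
  (bslope (d1' + d2') (r1' + r2') - τ) -
    ((r2' : ℝ) / (r2 : ℝ)) * (((r1 : ℝ) + (r2 : ℝ)) / ((r1' : ℝ) + (r2' : ℝ))) *
      (bslope (d1 + d2) (r1 + r2) - τ)

universe v u

variable {C : Type u} [Category.{v} C] [Abelian C]

/-- `(E1', E2')` is a subtriple of `(E1, E2, Φ)` : `Φ` maps `E2'` into `E1'`. -/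
def IsSubtriple {E1 E2 : C} (Φ : E2 ⟶ E1) (E1' : Subobject E1) (E2' : Subobject E2) : Prop :=
  E1'.Factors (E2'.arrow ≫ Φ)

/-- `θ_τ` of a subtriple, expressed through rank and degree functions. -/
def theta (rank : C → ℕ) (deg : C → ℤ) (E1 E2 : C) (τ : ℝ)
    (E1' : Subobject E1) (E2' : Subobject E2) : ℝ :=
  thetaTau τ (rank E1) (rank E2) (deg E1) (deg E2)
    (rank (E1' : C)) (rank (E2' : C)) (deg (E1' : C)) (deg (E2' : C))

/-- τ-stability of the holomorphic triple `(E1, E2, Φ)`. -/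
def TStable (rank : C → ℕ) (deg : C → ℤ) (E1 E2 : C) (Φ : E2 ⟶ E1) (τ : ℝ) : Prop :=
  ∀ (E1' : Subobject E1) (E2' : Subobject E2), IsSubtriple Φ E1' E2' →
    ¬(E1' = ⊥ ∧ E2' = ⊥) → ¬(E1' = ⊤ ∧ E2' = ⊤) →
    theta rank deg E1 E2 τ E1' E2' < 0

/-- τ-semistability of the holomorphic triple `(E1, E2, Φ)`. -/
def TSemistable (rank : C → ℕ) (deg : C → ℤ) (E1 E2 : C) (Φ : E2 ⟶ E1) (τ : ℝ) : Prop :=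
  ∀ (E1' : Subobject E1) (E2' : Subobject E2), IsSubtriple Φ E1' E2' →
    ¬(E1' = ⊥ ∧ E2' = ⊥) → ¬(E1' = ⊤ ∧ E2' = ⊤) →
    theta rank deg E1 E2 τ E1' E2' ≤ 0

/-- Slope stability for a single bundle. -/
def BStable (rank : C → ℕ) (deg : C → ℤ) (B : C) : Prop :=
  ∀ X : Subobject B, X ≠ ⊥ → X ≠ ⊤ →
    bslope (deg (X : C)) (rank (X : C)) < bslope (deg B) (rank B)

/-- Slope semistability for a single bundle. -/
def BSemistable (rank : C → ℕ) (deg : C → ℤ) (B : C) : Prop :=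
  ∀ X : Subobject B, X ≠ ⊥ →
    bslope (deg (X : C)) (rank (X : C)) ≤ bslope (deg B) (rank B)

lemma theta_aux_real (τ b ab d' r' r2' D : ℝ) (hb : 0 < b) (hab : 0 < ab) (hr' : 0 < r')
    (h : d' / r' - τ - r2' / b * (ab / r') * (D / ab - τ) < 0) :
    b * d' - b * r' * τ - r2' * (D - ab * τ) < 0 := by
  have key : b * d' - b * r' * τ - r2' * (D - ab * τ)
      = b * r' * (d' / r' - τ - r2' / b * (ab / r') * (D / ab - τ)) := by
    field_simp
  rw [key]
  exact mul_neg_of_pos_of_neg (by positivity) h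

lemma theta_aux (τ : ℝ) (r1 r2 : ℕ) (d1 d2 : ℤ) (r1' r2' : ℕ) (d1' d2' : ℤ)
    (h1 : 0 < r1) (h2 : 0 < r2) (hr' : 0 < r1' + r2')
    (h : thetaTau τ r1 r2 d1 d2 r1' r2' d1' d2' < 0) :
    (r2 : ℝ) * ((d1' : ℝ) + (d2' : ℝ)) - (r2 : ℝ) * ((r1' : ℝ) + (r2' : ℝ)) * τ
      - (r2' : ℝ) * (((d1 : ℝ) + (d2 : ℝ)) - ((r1 : ℝ) + (r2 : ℝ)) * τ) < 0 := by
  unfold thetaTau bslope at h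
  push_cast at h
  exact theta_aux_real τ (r2 : ℝ) ((r1 : ℝ) + (r2 : ℝ)) ((d1' : ℝ) + (d2' : ℝ))
    ((r1' : ℝ) + (r2' : ℝ)) (r2' : ℝ) ((d1 : ℝ) + (d2 : ℝ))
    (by exact_mod_cast h2) (by exact_mod_cast Nat.add_pos_left h1 r2)
    (by exact_mod_cast hr') h

lemma sigma_aux (τ a b D1 D2 c : ℝ) (ha : 0 < a) (hb : 0 < b) (hc : 0 < c)
    (h : τ < D1 / a + b / c * (D1 / a - D2 / b)) :
    ((a + b) * τ - (D1 + D2)) / b < (1 + (a + b) / c) * (D1 / a - D2 / b) := by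
  rw [div_lt_iff₀ hb]
  have h' : (a + b) * τ < (a + b) * (D1 / a + b / c * (D1 / a - D2 / b)) :=
    (mul_lt_mul_iff_right₀ (by positivity)).2 h
  have e : (a + b) * (D1 / a + b / c * (D1 / a - D2 / b)) - (D1 + D2)
      = (1 + (a + b) / c) * (D1 / a - D2 / b) * b := by
    field_simp
    ring
  linarith

lemma tau_form_gt (τ a b D1 D2 : ℝ) (ha : 0 < a) (hb : 0 < b) (hab : b < a)
    (key : b * (D2 - D1 + (a - b) * τ) < 0) :
    τ < D1 / a + b / |a - b| * (D1 / a - D2 / b) := by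
  have ha' : a ≠ 0 := ne_of_gt ha
  have hb' : b ≠ 0 := ne_of_gt hb
  have hab' : a - b ≠ 0 := by intro h; nlinarith
  rw [abs_of_pos (by linarith : (0:ℝ) < a - b),
    show D1 / a + b / (a - b) * (D1 / a - D2 / b) = (D1 - D2) / (a - b) by field_simp; ring,
    lt_div_iff₀ (by linarith : (0:ℝ) < a - b)]
  nlinarith

lemma tau_form_lt (τ a b D1 D2 : ℝ) (ha : 0 < a) (hb : 0 < b) (hab : a < b)
    (key : a * (b - a) * τ + a * D1 + a * D2 - 2 * b * D1 < 0) :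
    τ < D1 / a + b / |a - b| * (D1 / a - D2 / b) := by
  have ha' : a ≠ 0 := ne_of_gt ha
  have hb' : b ≠ 0 := ne_of_gt hb
  have hab' : b - a ≠ 0 := by intro h; nlinarith
  rw [abs_of_neg (by linarith : a - b < (0:ℝ)), neg_sub,
    show D1 / a + b / (b - a) * (D1 / a - D2 / b)
        = (2 * b * D1 - a * D1 - a * D2) / (a * (b - a)) by field_simp; ring,
    lt_div_iff₀ (by nlinarith : (0:ℝ) < a * (b - a))]
  nlinarith

/-- upper bound on `τ` for a `τ`-stable triple with `r₁ ≠ r₂`. -/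
theorem tau_upper_bound_of_tStable
    (rank : C → ℕ) (deg : C → ℤ) (E1 E2 : C) (Φ : E2 ⟶ E1) (τ : ℝ)
    (hrank_bot : ∀ (B : C) (X : Subobject B), X = ⊥ ↔ rank (X : C) = 0)
    (hrank_top : ∀ B : C, rank ((⊤ : Subobject B) : C) = rank B)
    (hdeg_top : ∀ B : C, deg ((⊤ : Subobject B) : C) = deg B)
    (hrank_add : ∀ (B : C) (X : Subobject B), rank B = rank (X : C) + rank (cokernel X.arrow))
    (hdeg_add : ∀ (B : C) (X : Subobject B), deg B = deg (X : C) + deg (cokernel X.arrow))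
    (hiso : ∀ A B : C, Nonempty (A ≅ B) → rank A = rank B ∧ deg A = deg B)
    (h1 : 0 < rank E1) (h2 : 0 < rank E2) (hne : rank E1 ≠ rank E2)
    (hst : TStable rank deg E1 E2 Φ τ) :
    τ < bslope (deg E1) (rank E1) +
        ((rank E2 : ℝ) / |(rank E1 : ℝ) - (rank E2 : ℝ)|) *
          (bslope (deg E1) (rank E1) - bslope (deg E2) (rank E2)) ∧
      (∀ σ : ℝ,
        σ = (((rank E1 : ℝ) + (rank E2 : ℝ)) * τ - ((deg E1 : ℝ) + (deg E2 : ℝ))) /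
              (rank E2 : ℝ) →
        σ < (1 + ((rank E1 : ℝ) + (rank E2 : ℝ)) / |(rank E1 : ℝ) - (rank E2 : ℝ)|) *
              (bslope (deg E1) (rank E1) - bslope (deg E2) (rank E2))) := by
  have ha0 : (0:ℝ) < (rank E1 : ℝ) := by exact_mod_cast h1
  have hb0 : (0:ℝ) < (rank E2 : ℝ) := by exact_mod_cast h2
  -- ⊥ ≠ ⊤ in objects of positive rank
  have hbotne : ∀ (B : C), 0 < rank B → (⊥ : Subobject B) ≠ ⊤ := by
    intro B hB h
    have h0 : rank ((⊥ : Subobject B) : C) = 0 := (hrank_bot B ⊥).mp rfl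
    rw [h, hrank_top B] at h0
    omega
  -- deg of ⊥ is 0
  have hdegbot : ∀ B : C, deg ((⊥ : Subobject B) : C) = 0 := by
    intro B
    have hadd := hdeg_add B (⊥ : Subobject B)
    have h2' := (hiso (cokernel (⊥ : Subobject B).arrow) B
      ⟨cokernelIsoOfEq Subobject.bot_arrow ≪≫ cokernelZeroIsoTarget⟩).2
    omega
  -- kernel/image additivity
  have hKI : Nonempty (cokernel (kernelSubobject Φ).arrow ≅ ((imageSubobject Φ : Subobject E1) : C)) :=
    ⟨cokernelIsoOfEq (kernelSubobject_arrow Φ).symm ≪≫ cokernelEpiComp _ _ ≪≫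
      Abelian.coimageIsoImage' Φ ≪≫ (imageSubobjectIso Φ).symm⟩
  have hr2add : rank E2 = rank ((kernelSubobject Φ : Subobject E2) : C)
      + rank ((imageSubobject Φ : Subobject E1) : C) := by
    have h := hrank_add E2 (kernelSubobject Φ)
    rwa [(hiso _ _ hKI).1] at h
  have hd2add : deg E2 = deg ((kernelSubobject Φ : Subobject E2) : C)
      + deg ((imageSubobject Φ : Subobject E1) : C) := by
    have h := hdeg_add E2 (kernelSubobject Φ)
    rwa [(hiso _ _ hKI).2] at h
  have hi_le : rank ((imageSubobject Φ : Subobject E1) : C) ≤ rank E1 := by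
    have := hrank_add E1 (imageSubobject Φ)
    omega
  -- real versions
  have e_i : (rank ((imageSubobject Φ : Subobject E1) : C) : ℝ)
      = (rank E2 : ℝ) - (rank ((kernelSubobject Φ : Subobject E2) : C) : ℝ) := by
    have : ((rank E2 : ℕ) : ℝ) = (rank ((kernelSubobject Φ : Subobject E2) : C) : ℝ)
        + (rank ((imageSubobject Φ : Subobject E1) : C) : ℝ) := by exact_mod_cast hr2add
    linarith
  have e_dI : ((deg ((imageSubobject Φ : Subobject E1) : C) : ℤ) : ℝ)
      = ((deg E2 : ℤ) : ℝ) - ((deg ((kernelSubobject Φ : Subobject E2) : C) : ℤ) : ℝ) := by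
    have : ((deg E2 : ℤ) : ℝ) = ((deg ((kernelSubobject Φ : Subobject E2) : C) : ℤ) : ℝ)
        + ((deg ((imageSubobject Φ : Subobject E1) : C) : ℤ) : ℝ) := by exact_mod_cast hd2add
    linarith
  have ei_le : (rank ((imageSubobject Φ : Subobject E1) : C) : ℝ) ≤ (rank E1 : ℝ) := by
    exact_mod_cast hi_le
  have hk0 : (0:ℝ) ≤ (rank ((kernelSubobject Φ : Subobject E2) : C) : ℝ) := by positivity
  -- F0 : subtriple (⊤, ⊥)
  have hθ0 := hst ⊤ ⊥ (Subobject.top_factors _)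
    (fun h => hbotne E1 h1 h.1.symm) (fun h => hbotne E2 h2 h.2)
  have F0 := theta_aux τ (rank E1) (rank E2) (deg E1) (deg E2) _ _ _ _ h1 h2
    (by rw [hrank_top E1, (hrank_bot E2 ⊥).mp rfl]; omega) hθ0
  rw [hrank_top E1, hdeg_top E1, (hrank_bot E2 ⊥).mp rfl, hdegbot E2] at F0
  push_cast at F0
  -- FA strict : subtriple (⊥, Ker Φ) when Ker Φ ≠ ⊥
  have FAstrict : kernelSubobject Φ ≠ ⊥ →
      (rank E2 : ℝ) * ((deg ((kernelSubobject Φ : Subobject E2) : C) : ℤ) : ℝ)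
        - (rank E2 : ℝ) * (rank ((kernelSubobject Φ : Subobject E2) : C) : ℝ) * τ
        - (rank ((kernelSubobject Φ : Subobject E2) : C) : ℝ) *
            (((deg E1 : ℤ) : ℝ) + ((deg E2 : ℤ) : ℝ)
              - ((rank E1 : ℝ) + (rank E2 : ℝ)) * τ) < 0 := by
    intro hK
    have hsub : IsSubtriple Φ (⊥ : Subobject E1) (kernelSubobject Φ) := by
      show (⊥ : Subobject E1).Factors ((kernelSubobject Φ).arrow ≫ Φ)
      rw [kernelSubobject_arrow_comp]
      exact Subobject.factors_zero
    have hkpos : 0 < rank ((kernelSubobject Φ : Subobject E2) : C) :=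
      Nat.pos_of_ne_zero (fun h0 => hK ((hrank_bot E2 _).mpr h0))
    have hθ := hst ⊥ (kernelSubobject Φ) hsub
      (fun h => hK h.2) (fun h => hbotne E1 h1 h.1)
    have FA := theta_aux τ (rank E1) (rank E2) (deg E1) (deg E2) _ _ _ _ h1 h2
      (by rw [(hrank_bot E1 ⊥).mp rfl]; omega) hθ
    rw [(hrank_bot E1 ⊥).mp rfl, hdegbot E1] at FA
    push_cast at FA
    linarith
  -- FB strict : subtriple (Im Φ, ⊤) when Im Φ ≠ ⊤
  have FBstrict : imageSubobject Φ ≠ ⊤ →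
      (rank E2 : ℝ) * ((((deg E2 : ℤ) : ℝ)
            - ((deg ((kernelSubobject Φ : Subobject E2) : C) : ℤ) : ℝ)) + ((deg E2 : ℤ) : ℝ))
        - (rank E2 : ℝ) * ((((rank E2 : ℝ)
            - (rank ((kernelSubobject Φ : Subobject E2) : C) : ℝ)) + (rank E2 : ℝ))) * τ
        - (rank E2 : ℝ) * (((deg E1 : ℤ) : ℝ) + ((deg E2 : ℤ) : ℝ)
            - ((rank E1 : ℝ) + (rank E2 : ℝ)) * τ) < 0 := by
    intro hI
    have hsub : IsSubtriple Φ (imageSubobject Φ) (⊤ : Subobject E2) :=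
      (Subobject.factors_iff _ _).mpr
        ⟨(⊤ : Subobject E2).arrow ≫ factorThruImageSubobject Φ, by simp⟩
    have hθ := hst (imageSubobject Φ) ⊤ hsub
      (fun h => hbotne E2 h2 h.2.symm) (fun h => hI h.1)
    have FB := theta_aux τ (rank E1) (rank E2) (deg E1) (deg E2) _ _ _ _ h1 h2
      (by rw [hrank_top E2]; omega) hθ
    rw [hrank_top E2, hdeg_top E2] at FB
    push_cast at FB
    rw [e_i, e_dI] at FB
    linarith
  -- the ≤ versions (hold unconditionally)
  have FA : (rank E2 : ℝ) * ((deg ((kernelSubobject Φ : Subobject E2) : C) : ℤ) : ℝ)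
        - (rank E2 : ℝ) * (rank ((kernelSubobject Φ : Subobject E2) : C) : ℝ) * τ
        - (rank ((kernelSubobject Φ : Subobject E2) : C) : ℝ) *
            (((deg E1 : ℤ) : ℝ) + ((deg E2 : ℤ) : ℝ)
              - ((rank E1 : ℝ) + (rank E2 : ℝ)) * τ) ≤ 0 := by
    by_cases hK : kernelSubobject Φ = ⊥
    · have hkz : (rank ((kernelSubobject Φ : Subobject E2) : C) : ℝ) = 0 := by
        rw [hK]; exact_mod_cast (hrank_bot E2 ⊥).mp rfl
      have hdz : ((deg ((kernelSubobject Φ : Subobject E2) : C) : ℤ) : ℝ) = 0 := by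
        rw [hK]; exact_mod_cast hdegbot E2
      rw [hkz, hdz]; exact le_of_eq (by ring)
    · exact le_of_lt (FAstrict hK)
  have FB : (rank E2 : ℝ) * ((((deg E2 : ℤ) : ℝ)
            - ((deg ((kernelSubobject Φ : Subobject E2) : C) : ℤ) : ℝ)) + ((deg E2 : ℤ) : ℝ))
        - (rank E2 : ℝ) * ((((rank E2 : ℝ)
            - (rank ((kernelSubobject Φ : Subobject E2) : C) : ℝ)) + (rank E2 : ℝ))) * τ
        - (rank E2 : ℝ) * (((deg E1 : ℤ) : ℝ) + ((deg E2 : ℤ) : ℝ)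
            - ((rank E1 : ℝ) + (rank E2 : ℝ)) * τ) ≤ 0 := by
    by_cases hI : imageSubobject Φ = ⊤
    · have hia : (rank ((imageSubobject Φ : Subobject E1) : C) : ℝ) = (rank E1 : ℝ) := by
        rw [hI]; exact_mod_cast hrank_top E1
      have hid : ((deg ((imageSubobject Φ : Subobject E1) : C) : ℤ) : ℝ) = ((deg E1 : ℤ) : ℝ) := by
        rw [hI]; exact_mod_cast hdeg_top E1
      have hk_eq : (rank ((kernelSubobject Φ : Subobject E2) : C) : ℝ)
          = (rank E2 : ℝ) - (rank E1 : ℝ) := by rw [← hia, e_i]; ring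
      have hdK_eq : ((deg ((kernelSubobject Φ : Subobject E2) : C) : ℤ) : ℝ)
          = ((deg E2 : ℤ) : ℝ) - ((deg E1 : ℤ) : ℝ) := by rw [← hid, e_dI]; ring
      rw [hk_eq, hdK_eq]
      exact le_of_eq (by ring)
    · exact le_of_lt (FBstrict hI)
  -- b - k ≥ 0
  have hbk : (0:ℝ) ≤ (rank E2 : ℝ) - (rank ((kernelSubobject Φ : Subobject E2) : C) : ℝ) := by
    rw [← e_i]; positivity
  -- S < 0
  have hS : ((deg E1 : ℤ) : ℝ) + ((deg E2 : ℤ) : ℝ)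
      - ((rank E1 : ℝ) + (rank E2 : ℝ)) * τ < 0 := by
    by_contra hS'
    push_neg at hS'
    nlinarith [FA, FB, F0, mul_nonneg hbk hS']
  -- main bound on τ
  have hne' : (rank E1 : ℝ) ≠ (rank E2 : ℝ) := by exact_mod_cast hne
  have hτ : τ < ((deg E1 : ℤ) : ℝ) / (rank E1 : ℝ)
      + (rank E2 : ℝ) / |(rank E1 : ℝ) - (rank E2 : ℝ)|
        * (((deg E1 : ℤ) : ℝ) / (rank E1 : ℝ) - ((deg E2 : ℤ) : ℝ) / (rank E2 : ℝ)) := by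
    rcases Nat.lt_or_ge (rank E2) (rank E1) with hcase | hcase
    · -- r1 > r2
      have hcase' : (rank E2 : ℝ) < (rank E1 : ℝ) := by exact_mod_cast hcase
      have hIne : imageSubobject Φ ≠ ⊤ := by
        intro h
        have : rank ((imageSubobject Φ : Subobject E1) : C) = rank E1 := by
          rw [h]; exact hrank_top E1
        omega
      have hP2 : 0 ≤ (rank ((kernelSubobject Φ : Subobject E2) : C) : ℝ)
          * (((rank E1 : ℝ) + (rank E2 : ℝ)) * τ
              - (((deg E1 : ℤ) : ℝ) + ((deg E2 : ℤ) : ℝ))) :=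
        mul_nonneg hk0 (by linarith)
      apply tau_form_gt τ _ _ _ _ ha0 hb0 hcase'
      linarith [FBstrict hIne, FA, hP2]
    · -- r1 < r2
      have hcase2 : rank E1 < rank E2 := by omega
      have hcase' : (rank E1 : ℝ) < (rank E2 : ℝ) := by exact_mod_cast hcase2
      have hKne : kernelSubobject Φ ≠ ⊥ := by
        intro h
        have : rank ((kernelSubobject Φ : Subobject E2) : C) = 0 := (hrank_bot E2 _).mp h
        omega
      have hP3 : 0 ≤ ((rank ((kernelSubobject Φ : Subobject E2) : C) : ℝ)
            - ((rank E2 : ℝ) - (rank E1 : ℝ)))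
          * (((rank E1 : ℝ) + (rank E2 : ℝ)) * τ
              - (((deg E1 : ℤ) : ℝ) + ((deg E2 : ℤ) : ℝ))) :=
        mul_nonneg (by linarith [ei_le, e_i]) (by linarith)
      apply tau_form_lt τ _ _ _ _ ha0 hb0 hcase'
      linarith [FAstrict hKne, FB, hP3]
  constructor
  · simpa only [bslope] using hτ
  · intro σ hσ
    rw [hσ]
    simp only [bslope]
    exact sigma_aux τ _ _ _ _ _ ha0 hb0
      (abs_pos.mpr (sub_ne_zero.mpr hne')) hτ
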